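/- Let W be a symmetric 3×3 real matrix such that the cycle condition (w_{1,2}+x₂)(w_{2,3}+x₃)(w_{3,1}+x₁) = (w_{1,3}+x₃)(w_{2,1}+x₁)(w_{3,2}+x₂) holds for all (x₁,x₂,x₃) in some open ball in ℝ³. Then w_{2,3} = w_{1,3}, w_{1,2} = w_{3,2}, and w_{3,1} = w_{2,1}; in particular all off-diagonal entries of W are equal. -/

import Mathlib

theorem offdiag_eq_of_cycle_on_ball (w : Fin 3 → Fin 3 → ℝ)
    (hsymm : ∀ j k, w j k = w k j)
    (hcycle : ∃ (x₀ : EuclideanSpace ℝ (Fin 3)) (δ : ℝ), 0 < δ ∧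
      ∀ x ∈ Metric.ball x₀ δ,
        (w 0 1 + x 1) * (w 1 2 + x 2) * (w 2 0 + x 0) =
        (w 0 2 + x 2) * (w 1 0 + x 0) * (w 2 1 + x 1)) :
    w 1 2 = w 0 2 ∧ w 0 1 = w 2 1 ∧ w 2 0 = w 1 0 ∧
      ∀ j k j' k' : Fin 3, j ≠ k → j' ≠ k' → w j k = w j' k' := by
  obtain ⟨x₀, δ, hδ, hb⟩ := hcycle
  set t : ℝ := δ / 2 with ht_def
  have ht : 0 < t := by positivity
  have key : ∀ s0 s1 s2 : ℝ, |s0| ≤ t → |s1| ≤ t → |s2| ≤ t →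
      (w 0 1 + (x₀ 1 + s1)) * (w 1 2 + (x₀ 2 + s2)) * (w 2 0 + (x₀ 0 + s0)) =
      (w 0 2 + (x₀ 2 + s2)) * (w 1 0 + (x₀ 0 + s0)) * (w 2 1 + (x₀ 1 + s1)) := by
    intro s0 s1 s2 h0 h1 h2
    set v : EuclideanSpace ℝ (Fin 3) := WithLp.toLp 2 ![s0, s1, s2] with hv
    have hmem : x₀ + v ∈ Metric.ball x₀ δ := by
      rw [Metric.mem_ball, dist_eq_norm, add_sub_cancel_left]
      have hnorm : ‖v‖ = Real.sqrt (∑ i : Fin 3, ‖v i‖ ^ 2) := EuclideanSpace.norm_eq v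
      rw [hnorm]
      have hbound : ∀ i : Fin 3, ‖v i‖ ^ 2 ≤ t ^ 2 := by
        intro i
        have habs : |v i| ≤ t := by rw [hv]; fin_cases i <;> simpa
        rw [Real.norm_eq_abs]
        nlinarith [abs_nonneg (v i)]
      have hsum : ∑ i : Fin 3, ‖v i‖ ^ 2 ≤ 3 * t ^ 2 := by
        calc _ ≤ ∑ _i : Fin 3, t ^ 2 := Finset.sum_le_sum (fun i _ => hbound i)
          _ = 3 * t ^ 2 := by simp
      calc Real.sqrt _ ≤ Real.sqrt (3 * t ^ 2) := Real.sqrt_le_sqrt hsum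
        _ < Real.sqrt (δ ^ 2) := by
            apply Real.sqrt_lt_sqrt (by positivity)
            rw [ht_def]; nlinarith
        _ = δ := Real.sqrt_sq hδ.le
    have h := hb _ hmem
    simpa [hv, PiLp.add_apply] using h
  have h10 : w 1 0 = w 0 1 := hsymm 1 0
  have h20 : w 2 0 = w 0 2 := hsymm 2 0
  have h21 : w 2 1 = w 1 2 := hsymm 2 1
  have habs0 : |(0:ℝ)| ≤ t := by simp [ht.le]
  have habst : |t| ≤ t := le_of_eq (abs_of_pos ht)
  have e000 := key 0 0 0 habs0 habs0 habs0
  have e100 := key t 0 0 habst habs0 habs0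
  have e010 := key 0 t 0 habs0 habst habs0
  have e001 := key 0 0 t habs0 habs0 habst
  have e110 := key t t 0 habst habst habs0
  have e101 := key t 0 t habst habs0 habst
  rw [h10, h20, h21] at e000 e100 e010 e001 e110 e101
  have ht2 : t ^ 2 ≠ 0 := by positivity
  have hbc : w 1 2 = w 0 2 := by
    have h : (w 1 2 + x₀ 2) * t ^ 2 = (w 0 2 + x₀ 2) * t ^ 2 := by
      linear_combination e110 - e100 - e010 + e000
    have := mul_right_cancel₀ ht2 h
    linarith
  have hab : w 0 1 = w 1 2 := by
    have h : (w 0 1 + x₀ 1) * t ^ 2 = (w 1 2 + x₀ 1) * t ^ 2 := by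
      linear_combination e101 - e100 - e001 + e000
    have := mul_right_cancel₀ ht2 h
    linarith
  refine ⟨hbc, by rw [h21, hab], by rw [h20, h10, hab, hbc], ?_⟩
  clear key hb e000 e100 e010 e001 e110 e101 ht2 habs0 habst ht hδ ht_def
  have f01 : w 0 1 = w 0 2 := hab.trans hbc
  have f10 : w 1 0 = w 0 2 := h10.trans f01
  have f12 : w 1 2 = w 0 2 := hbc
  have f21 : w 2 1 = w 0 2 := h21.trans hbc
  have f20 : w 2 0 = w 0 2 := h20
  have f02 : w 0 2 = w 0 2 := rfl
  intro j k j' k' hjk hj'k'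
  fin_cases j <;> fin_cases k <;> fin_cases j' <;> fin_cases k' <;>
    first
      | (exfalso; exact hjk rfl)
      | (exfalso; exact hj'k' rfl)
      | (refine Eq.trans (b := w 0 2) ?_ (Eq.symm ?_) <;>
          first
            | exact f01 | exact f10 | exact f12
            | exact f21 | exact f20 | exact f02)
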